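/- Let A and Λ be commuting symmetric positive definite D×D matrices, μ ∈ [0,1), S ≥ 1, σ² > 0, and suppose G_μ := 2(1−μ)I − ((1−μ)/(1+μ) + 1/S)ΛA is positive definite with 1 − (1/S)Tr[ΛAG_μ⁻¹] > 0. Then Σ := (σ²/S)(1 + κ_μ/S) Λ G_μ⁻¹, with κ_μ := Tr[ΛAG_μ⁻¹]/(1 − (1/S)Tr[ΛAG_μ⁻¹]), satisfies the matrix equation (1−μ)(ΛAΣ + ΣAΛ) − ((1+μ²)/(1−μ²))ΛAΣAΛ + (μ/(1−μ²))(ΛAΛAΣ + ΣAΛAΛ) = ΛCΛ, where C = (1/S)(AΣA + Tr[AΣ]A + σ²A). -/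

import Mathlib

theorem stmt5 (D : ℕ) (A Λ : Matrix (Fin D) (Fin D) ℝ)
    (hA : A.PosDef) (hΛ : Λ.PosDef) (hcomm : A * Λ = Λ * A)
    (μ S σ2 : ℝ) (hμ0 : 0 ≤ μ) (hμ1 : μ < 1) (hS : 1 ≤ S) (hσ : 0 < σ2)
    (G : Matrix (Fin D) (Fin D) ℝ)
    (hG : G = (2 * (1 - μ)) • (1 : Matrix (Fin D) (Fin D) ℝ)
      - ((1 - μ) / (1 + μ) + 1 / S) • (Λ * A))
    (hGpos : G.PosDef)
    (hden : 0 < 1 - (1 / S) * (Λ * A * G⁻¹).trace)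
    (κ : ℝ)
    (hκ : κ = (Λ * A * G⁻¹).trace / (1 - (1 / S) * (Λ * A * G⁻¹).trace))
    (Sig : Matrix (Fin D) (Fin D) ℝ)
    (hSig : Sig = (σ2 / S * (1 + κ / S)) • (Λ * G⁻¹))
    (C : Matrix (Fin D) (Fin D) ℝ)
    (hC : C = (1 / S) • (A * Sig * A + (A * Sig).trace • A + σ2 • A)) :
    (1 - μ) • (Λ * A * Sig + Sig * A * Λ)
      - ((1 + μ ^ 2) / (1 - μ ^ 2)) • (Λ * A * Sig * A * Λ)
      + (μ / (1 - μ ^ 2)) • (Λ * A * Λ * A * Sig + Sig * A * Λ * A * Λ)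
    = Λ * C * Λ := by
  -- scalar preliminaries
  have hSpos : (0:ℝ) < S := lt_of_lt_of_le one_pos hS
  have hS0 : S ≠ 0 := ne_of_gt hSpos
  have hu : (1 : ℝ) - 1 / S * (Λ * A * G⁻¹).trace ≠ 0 := ne_of_gt hden
  have hST : S - (Λ * A * G⁻¹).trace ≠ 0 := by
    intro h
    apply hu
    have h2 : (Λ * A * G⁻¹).trace = S := by linarith
    rw [h2]
    field_simp
    norm_num
  have hgen : ∀ T : ℝ, S - T ≠ 0 → 1 - 1/S*T ≠ 0 →
      σ2/S*(1 + (T/(1-1/S*T))/S) = σ2/(S-T) := by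
    intro T h1 h2
    rw [show (1:ℝ) - 1/S*T = (S-T)/S by field_simp]
    rw [div_div_eq_mul_div]
    field_simp
    ring
  have hcc : σ2 / S * (1 + κ / S) = σ2 / (S - (Λ * A * G⁻¹).trace) := by
    rw [hκ]; exact hgen _ hST hu
  have hμp : (1:ℝ) + μ ≠ 0 := by linarith
  have hμm : (1:ℝ) - μ ≠ 0 := by linarith
  have hμ2 : (1:ℝ) - μ ^ 2 ≠ 0 := by nlinarith [sq_nonneg μ]
  -- matrix preliminaries
  have hdet : IsUnit G.det := hGpos.det_pos.ne'.isUnit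
  have hGG : G * G⁻¹ = 1 := Matrix.mul_nonsing_inv G hdet
  have hGG' : G⁻¹ * G = 1 := Matrix.nonsing_inv_mul G hdet
  have cAΛ : ∀ X : Matrix (Fin D) (Fin D) ℝ, A * (Λ * X) = Λ * (A * X) := fun X => by
    rw [← mul_assoc, hcomm, mul_assoc]
  have hGA : G * A = A * G := by
    rw [hG]; simp [sub_mul, mul_sub, Matrix.smul_mul, Matrix.mul_smul, mul_assoc, hcomm, cAΛ]
  have hGΛ : G * Λ = Λ * G := by
    rw [hG]; simp [sub_mul, mul_sub, Matrix.smul_mul, Matrix.mul_smul, mul_assoc, hcomm, cAΛ]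
  have cGA : G⁻¹ * A = A * G⁻¹ := by
    calc G⁻¹ * A = G⁻¹ * (A * (G * G⁻¹)) := by rw [hGG, mul_one]
    _ = G⁻¹ * (A * G) * G⁻¹ := by simp [mul_assoc]
    _ = G⁻¹ * (G * A) * G⁻¹ := by rw [← hGA]
    _ = G⁻¹ * G * (A * G⁻¹) := by simp [mul_assoc]
    _ = A * G⁻¹ := by rw [hGG', one_mul]
  have cGΛ : G⁻¹ * Λ = Λ * G⁻¹ := by
    calc G⁻¹ * Λ = G⁻¹ * (Λ * (G * G⁻¹)) := by rw [hGG, mul_one]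
    _ = G⁻¹ * (Λ * G) * G⁻¹ := by simp [mul_assoc]
    _ = G⁻¹ * (G * Λ) * G⁻¹ := by rw [← hGΛ]
    _ = G⁻¹ * G * (Λ * G⁻¹) := by simp [mul_assoc]
    _ = Λ * G⁻¹ := by rw [hGG', one_mul]
  have cGA' : ∀ X : Matrix (Fin D) (Fin D) ℝ, G⁻¹ * (A * X) = A * (G⁻¹ * X) := fun X => by
    rw [← mul_assoc, cGA, mul_assoc]
  have cGΛ' : ∀ X : Matrix (Fin D) (Fin D) ℝ, G⁻¹ * (Λ * X) = Λ * (G⁻¹ * X) := fun X => by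
    rw [← mul_assoc, cGΛ, mul_assoc]
  -- key identity: G-cancellation
  have hkey : (2 * (1 - μ)) • (Λ * (Λ * (A * G⁻¹)))
      - ((1 - μ) / (1 + μ) + 1 / S) • (Λ * (Λ * (Λ * (A * (A * G⁻¹)))))
      = Λ * (Λ * A) := by
    have h1 : G * (Λ * (Λ * A)) = (2 * (1 - μ)) • (Λ * (Λ * A))
        - ((1 - μ) / (1 + μ) + 1 / S) • (Λ * A * (Λ * (Λ * A))) := by
      rw [hG]; simp [sub_mul, Matrix.smul_mul]
    have h3 : G * (Λ * (Λ * A)) = Λ * (Λ * A) * G := by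
      rw [← mul_assoc G Λ (Λ*A), hGΛ, mul_assoc Λ G (Λ*A), ← mul_assoc G Λ A, hGΛ,
        mul_assoc Λ G A, hGA, ← mul_assoc Λ A G, ← mul_assoc Λ (Λ*A) G]
    have h2 : (2 * (1 - μ)) • (Λ * (Λ * (A * G⁻¹)))
        - ((1 - μ) / (1 + μ) + 1 / S) • (Λ * (Λ * (Λ * (A * (A * G⁻¹)))))
        = (G * (Λ * (Λ * A))) * G⁻¹ := by
      rw [h1]
      simp only [sub_mul, Matrix.smul_mul, mul_assoc, hcomm, cAΛ, cGA, cGΛ, cGA', cGΛ']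
    rw [h2, h3, mul_assoc, hGG, mul_one]
  subst hC hSig
  rw [hcc]
  set c : ℝ := σ2 / (S - (Λ * A * G⁻¹).trace) with hcdef
  clear_value c
  have e1 : Λ * A * (c • (Λ * G⁻¹)) = c • (Λ * (Λ * (A * G⁻¹))) := by
    simp only [Matrix.mul_smul, Matrix.smul_mul, mul_assoc, hcomm, cAΛ, cGA, cGΛ, cGA', cGΛ']
  have e2 : (c • (Λ * G⁻¹)) * A * Λ = c • (Λ * (Λ * (A * G⁻¹))) := by
    simp only [Matrix.mul_smul, Matrix.smul_mul, mul_assoc, hcomm, cAΛ, cGA, cGΛ, cGA', cGΛ']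
  have e3 : Λ * A * (c • (Λ * G⁻¹)) * A * Λ = c • (Λ * (Λ * (Λ * (A * (A * G⁻¹))))) := by
    simp only [Matrix.mul_smul, Matrix.smul_mul, mul_assoc, hcomm, cAΛ, cGA, cGΛ, cGA', cGΛ']
  have e4 : Λ * A * Λ * A * (c • (Λ * G⁻¹)) = c • (Λ * (Λ * (Λ * (A * (A * G⁻¹))))) := by
    simp only [Matrix.mul_smul, Matrix.smul_mul, mul_assoc, hcomm, cAΛ, cGA, cGΛ, cGA', cGΛ']
  have e5 : (c • (Λ * G⁻¹)) * A * Λ * A * Λ = c • (Λ * (Λ * (Λ * (A * (A * G⁻¹))))) := by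
    simp only [Matrix.mul_smul, Matrix.smul_mul, mul_assoc, hcomm, cAΛ, cGA, cGΛ, cGA', cGΛ']
  have htr : (A * (c • (Λ * G⁻¹))).trace = c * (Λ * A * G⁻¹).trace := by
    rw [Matrix.mul_smul, Matrix.trace_smul, smul_eq_mul, ← mul_assoc, hcomm]
  have e6 : Λ * ((1 / S) • (A * (c • (Λ * G⁻¹)) * A + (A * (c • (Λ * G⁻¹))).trace • A
        + σ2 • A)) * Λ
      = (1 / S * c) • (Λ * (Λ * (Λ * (A * (A * G⁻¹)))))
        + (1 / S * (c * (Λ * A * G⁻¹).trace)) • (Λ * (Λ * A))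
        + (1 / S * σ2) • (Λ * (Λ * A)) := by
    rw [htr]
    simp only [Matrix.mul_smul, Matrix.smul_mul, mul_add, add_mul, smul_add, smul_smul,
      mul_assoc, hcomm, cAΛ, cGA, cGΛ, cGA', cGΛ']
    try match_scalars <;> ring
  rw [e3, e4, e5, e1, e2, e6, ← hkey]
  obtain ⟨T, hT⟩ : ∃ T, (Λ * A * G⁻¹).trace = T := ⟨_, rfl⟩
  rw [hT] at hST hcdef ⊢
  subst hcdef
  match_scalars <;> field_simp <;> ring
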